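/- Let μ be the Lie bracket on ℝ⁴ = ℝ³ × ℝ given by the cross product on the first factor and zero on the second factor, i.e., μ((u,s),(v,t)) = (u × v, 0) — the Lie algebra su(2) ⊕ ℝ. Then for every nondegenerate symmetric bilinear form B on ℝ⁴, the bracket μ is NOT in the null cone of the O(B)-action; that is, 0 does not lie in the closure of the orbit O(B)·μ. (This is the only 4-dimensional real Lie algebra not in the null cone of the O(1,3)- or O(2,2)-action.) -/

import Mathlib

set_option maxHeartbeats 1000000

/-- The isometry group `O(B)` of a bilinear form `B`. -/
def IsometryGrp {V : Type*} [AddCommGroup V] [Module ℝ V]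
    (B : LinearMap.BilinForm ℝ V) : Set (V ≃ₗ[ℝ] V) :=
  {A | ∀ x y, B (A x) (A y) = B x y}

/-- `μ` is in the null cone of the `O(B)`-action: `0` lies in the closure of the orbit
`O(B)·μ`, `(A·μ)(x,y) = A⁻¹(μ(Ax,Ay))`, in the topology of pointwise convergence. -/
def InNullCone {V : Type*} [AddCommGroup V] [Module ℝ V] [TopologicalSpace V]
    (B : LinearMap.BilinForm ℝ V) (μ : V → V → V) : Prop :=
  (0 : V → V → V) ∈
    closure {f : V → V → V | ∃ A ∈ IsometryGrp B, f = fun x y => A.symm (μ (A x) (A y))}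

/-- The bracket of `su(2) ⊕ ℝ` on `ℝ⁴ = ℝ³ × ℝ`: the cross product on the first factor and
zero on the second factor. -/
def su2SumRBracket : ((Fin 3 → ℝ) × ℝ) → ((Fin 3 → ℝ) × ℝ) → ((Fin 3 → ℝ) × ℝ) :=
  fun a b => (crossProduct a.1 b.1, 0)

namespace Su2SumRAux

open Matrix

noncomputable section

abbrev V4 := (Fin 3 → ℝ) × ℝ

def eEquiv : V4 ≃ₗ[ℝ] (Fin 4 → ℝ) where
  toFun p := ![p.1 0, p.1 1, p.1 2, p.2]
  invFun v := (![v 0, v 1, v 2], v 3)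
  map_add' x y := by funext i; fin_cases i <;> simp
  map_smul' c x := by funext i; fin_cases i <;> simp
  left_inv x := by
    refine Prod.ext ?_ rfl
    funext i; fin_cases i <;> simp
  right_inv v := by funext i; fin_cases i <;> simp

def bV : Module.Basis (Fin 4) ℝ V4 := Module.Basis.ofEquivFun eEquiv

lemma bV_repr (x : V4) (i : Fin 4) : bV.repr x i = eEquiv x i := rfl

lemma bV_apply (i : Fin 4) : bV i = eEquiv.symm (Pi.single i 1) := by
  simp [bV, Module.Basis.ofEquivFun]

def adL (v : V4) : V4 →ₗ[ℝ] V4 :=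
  LinearMap.prod ((crossProduct v.1).comp (LinearMap.fst ℝ (Fin 3 → ℝ) ℝ)) 0

lemma adL_apply (v w : V4) : adL v w = su2SumRBracket v w := rfl

lemma adL_add (x y : V4) : adL (x + y) = adL x + adL y := by
  ext w <;> simp [adL, map_add]

lemma adL_smul (c : ℝ) (x : V4) : adL (c • x) = c • adL x := by
  ext w <;> simp [adL, _root_.map_smul]

def kappa (x y : V4) : ℝ := LinearMap.trace ℝ V4 (adL x ∘ₗ adL y)

def Kmat : Matrix (Fin 4) (Fin 4) ℝ := Matrix.diagonal ![-2,-2,-2,0]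

lemma toMatrix_entry (g : V4 →ₗ[ℝ] V4) (k j : Fin 4) :
    LinearMap.toMatrix bV bV g k j = eEquiv (g (bV j)) k := by
  rw [LinearMap.toMatrix_apply]; rfl

lemma trace_eq (g : V4 →ₗ[ℝ] V4) :
    LinearMap.trace ℝ V4 g = ∑ k : Fin 4, eEquiv (g (bV k)) k := by
  rw [LinearMap.trace_eq_matrix_trace ℝ bV g]
  simp [Matrix.trace, Matrix.diag, toMatrix_entry]

lemma bV_explicit : bV 0 = (![1,0,0], 0) ∧ bV 1 = (![0,1,0], 0) ∧ bV 2 = (![0,0,1], 0)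
    ∧ bV 3 = (0, 1) := by
  refine ⟨?_, ?_, ?_, ?_⟩ <;>
    · rw [bV_apply]
      refine Prod.ext ?_ ?_ <;>
        simp [eEquiv, Pi.single_apply]

lemma kappa_basis : ∀ i j, kappa (bV i) (bV j) = Kmat i j := by
  obtain ⟨h0, h1, h2, h3⟩ := bV_explicit
  intro i j
  fin_cases i <;> fin_cases j <;>
    simp [kappa, trace_eq, adL, h0, h1, h2, h3, Fin.sum_univ_four, cross_apply, eEquiv, Kmat,
      Matrix.diagonal] <;> norm_num

def adLM : V4 →ₗ[ℝ] Module.End ℝ V4 where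
  toFun := adL
  map_add' := adL_add
  map_smul' := adL_smul

lemma adL_sum (c : Fin 4 → ℝ) :
    adL (∑ i, c i • bV i) = ∑ i, c i • adL (bV i) := by
  rw [show adL (∑ i, c i • bV i) = adLM (∑ i, c i • bV i) from rfl, map_sum]
  exact Finset.sum_congr rfl fun i _ => _root_.map_smul adLM (c i) (bV i)

lemma kappa_sum (c d : Fin 4 → ℝ) :
    kappa (∑ i, c i • bV i) (∑ j, d j • bV j)
      = ∑ i, ∑ j, c i * d j * kappa (bV i) (bV j) := by
  rw [kappa, adL_sum, adL_sum, ← Module.End.mul_eq_comp, Finset.sum_mul_sum]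
  rw [map_sum]
  refine Finset.sum_congr rfl fun i _ => ?_
  rw [map_sum]
  refine Finset.sum_congr rfl fun j _ => ?_
  rw [smul_mul_smul_comm, _root_.map_smul, smul_eq_mul, Module.End.mul_eq_comp, kappa]

/-- structure constants of a candidate bracket -/
def Nf (f : V4 → V4 → V4) (a b k : Fin 4) : ℝ := eEquiv (f (bV a) (bV b)) k

/-- the "Killing matrix" of a candidate bracket, computed from structure constants -/
def km (f : V4 → V4 → V4) : Matrix (Fin 4) (Fin 4) ℝ :=
  Matrix.of fun a b => ∑ k, ∑ j, Nf f a j k * Nf f b k j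

lemma km_orbit (A : V4 ≃ₗ[ℝ] V4) (a b : Fin 4) :
    km (fun x y => A.symm (su2SumRBracket (A x) (A y))) a b
      = kappa (A (bV a)) (A (bV b)) := by
  classical
  set f := fun x y => A.symm (su2SumRBracket (A x) (A y)) with hf
  have hmat : ∀ c : Fin 4, ∀ k j : Fin 4,
      LinearMap.toMatrix bV bV (A.symm.conj (adL (A (bV c)))) k j = Nf f c j k := by
    intro c k j
    rw [toMatrix_entry]
    simp [LinearEquiv.conj_apply, Nf, hf, su2SumRBracket, adL]
  have key : kappa (A (bV a)) (A (bV b))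
      = LinearMap.trace ℝ V4
          ((A.symm.conj (adL (A (bV a)))) ∘ₗ (A.symm.conj (adL (A (bV b))))) := by
    rw [kappa]
    have : (A.symm.conj (adL (A (bV a)))) ∘ₗ (A.symm.conj (adL (A (bV b))))
        = A.symm.conj (adL (A (bV a)) ∘ₗ adL (A (bV b))) := by
      ext w <;> simp [LinearEquiv.conj_apply]
    rw [this, LinearMap.trace_conj']
  rw [key, LinearMap.trace_eq_matrix_trace ℝ bV, LinearMap.toMatrix_comp bV bV bV]
  simp [Matrix.trace, Matrix.diag, Matrix.mul_apply, km, hmat]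

/-- the matrix of a linear automorphism in basis `bV` -/
def Mof (A : V4 ≃ₗ[ℝ] V4) : Matrix (Fin 4) (Fin 4) ℝ := LinearMap.toMatrix bV bV A.toLinearMap

lemma Mof_mul_symm (A : V4 ≃ₗ[ℝ] V4) : Mof A * Mof A.symm = 1 := by
  rw [Mof, Mof, ← LinearMap.toMatrix_comp bV bV bV]
  rw [show A.toLinearMap ∘ₗ A.symm.toLinearMap = LinearMap.id by ext x <;> simp]
  exact LinearMap.toMatrix_id bV

lemma A_apply_basis (A : V4 ≃ₗ[ℝ] V4) (a : Fin 4) :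
    A (bV a) = ∑ i, Mof A i a • bV i := by
  refine (bV.sum_repr (A (bV a))).symm.trans (Finset.sum_congr rfl fun i _ => ?_)
  congr 1
  rw [Mof, LinearMap.toMatrix_apply]
  rfl

lemma km_orbit_matrix (A : V4 ≃ₗ[ℝ] V4) :
    km (fun x y => A.symm (su2SumRBracket (A x) (A y)))
      = (Mof A)ᵀ * Kmat * Mof A := by
  ext a b
  rw [show km (fun x y => A.symm (su2SumRBracket (A x) (A y))) a b
      = kappa (A (bV a)) (A (bV b)) from km_orbit A a b]
  rw [show A (bV a) = ∑ i, Mof A i a • bV i from A_apply_basis A a,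
      show A (bV b) = ∑ j, Mof A j b • bV j from A_apply_basis A b,
      kappa_sum]
  simp only [kappa_basis]
  simp [Matrix.mul_apply, Matrix.transpose_apply, Finset.sum_mul, Finset.mul_sum]
  rw [Finset.sum_comm]
  refine Finset.sum_congr rfl fun j _ => Finset.sum_congr rfl fun i _ => by ring

end

end Su2SumRAux

namespace Su2SumRAux
open Matrix
noncomputable section

theorem inv_trace_invariant (Q : Matrix (Fin 4) (Fin 4) ℝ) (hQ : Q.det ≠ 0)
    (M M' : Matrix (Fin 4) (Fin 4) ℝ) (hMM' : M * M' = 1)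
    (hiso : Mᵀ * Q * M = Q) (K : Matrix (Fin 4) (Fin 4) ℝ) :
    ((Q⁻¹ * (Mᵀ * K * M)) * (Q⁻¹ * (Mᵀ * K * M))).trace = ((Q⁻¹ * K) * (Q⁻¹ * K)).trace := by
  have hQu : IsUnit Q.det := (Ne.isUnit hQ)
  have hQi : Q⁻¹ * Q = 1 := Matrix.nonsing_inv_mul Q hQu
  have hQi' : Q * Q⁻¹ = 1 := Matrix.mul_nonsing_inv Q hQu
  have h2 : Mᵀ * Q = Q * M' := by
    calc Mᵀ * Q = (Mᵀ * Q * M) * M' := by rw [Matrix.mul_assoc, hMM', Matrix.mul_one]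
      _ = Q * M' := by rw [hiso]
  have h1 : Q⁻¹ * Mᵀ = M' * Q⁻¹ := by
    calc Q⁻¹ * Mᵀ = Q⁻¹ * (Mᵀ * Q * Q⁻¹) := by
          rw [Matrix.mul_assoc Mᵀ, hQi', Matrix.mul_one]
      _ = Q⁻¹ * (Q * (M' * Q⁻¹)) := by rw [h2, Matrix.mul_assoc]
      _ = M' * Q⁻¹ := by rw [← Matrix.mul_assoc, hQi, Matrix.one_mul]
  have key : Q⁻¹ * (Mᵀ * K * M) = M' * (Q⁻¹ * K) * M := by
    simp only [← Matrix.mul_assoc]; rw [h1]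
  have hcancel : M * (M' * (Q⁻¹ * (K * M))) = Q⁻¹ * (K * M) := by
    rw [← Matrix.mul_assoc M M', hMM', Matrix.one_mul]
  have hsq : (M' * (Q⁻¹ * K) * M) * (M' * (Q⁻¹ * K) * M)
      = M' * ((Q⁻¹ * K) * (Q⁻¹ * K)) * M := by
    simp only [Matrix.mul_assoc]; rw [hcancel]
  rw [key, hsq, Matrix.trace_mul_cycle, hMM', Matrix.one_mul]

theorem J0_ne_zero (Q : Matrix (Fin 4) (Fin 4) ℝ) (hQ : Q.det ≠ 0) (hsym : Qᵀ = Q) :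
    ((Q⁻¹ * (Matrix.diagonal ![(-2:ℝ),-2,-2,0])) * (Q⁻¹ * Matrix.diagonal ![(-2:ℝ),-2,-2,0])).trace ≠ 0 := by
  set G := Q⁻¹ with hG
  have hGsym : Gᵀ = G := by rw [hG, Matrix.transpose_nonsing_inv, hsym]
  have hGdet : G.det ≠ 0 := by
    rw [hG, Matrix.det_nonsing_inv]
    simpa [Ring.inverse_eq_inv'] using inv_ne_zero hQ
  have hsymE : ∀ i j, G i j = G j i := by
    intro i j
    have h := congrFun (congrFun hGsym i) j
    simpa [Matrix.transpose_apply] using h.symm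
  have htr : ((G * (Matrix.diagonal ![(-2:ℝ),-2,-2,0])) * (G * Matrix.diagonal ![(-2:ℝ),-2,-2,0])).trace
      = 4 * ((G 0 0)^2 + (G 0 1)^2 + (G 0 2)^2 + (G 1 0)^2 + (G 1 1)^2 + (G 1 2)^2
          + (G 2 0)^2 + (G 2 1)^2 + (G 2 2)^2) := by
    simp [Matrix.trace, Matrix.diag, Matrix.mul_apply, Fin.sum_univ_four, Matrix.diagonal,
      hsymE 1 0, hsymE 2 0, hsymE 2 1]
    ring
  rw [htr]
  intro hzero
  have hsum : (G 0 0)^2 + (G 0 1)^2 + (G 0 2)^2 + (G 1 0)^2 + (G 1 1)^2 + (G 1 2)^2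
      + (G 2 0)^2 + (G 2 1)^2 + (G 2 2)^2 = 0 := by linarith
  have n00 := sq_nonneg (G 0 0); have n01 := sq_nonneg (G 0 1); have n02 := sq_nonneg (G 0 2)
  have n10 := sq_nonneg (G 1 0); have n11 := sq_nonneg (G 1 1); have n12 := sq_nonneg (G 1 2)
  have n20 := sq_nonneg (G 2 0); have n21 := sq_nonneg (G 2 1); have n22 := sq_nonneg (G 2 2)
  have h00 : G 0 0 = 0 := by have : (G 0 0)^2 = 0 := by linarith
                             exact pow_eq_zero_iff (by norm_num) |>.mp this
  have h01 : G 0 1 = 0 := by have : (G 0 1)^2 = 0 := by linarith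
                             exact pow_eq_zero_iff (by norm_num) |>.mp this
  have h02 : G 0 2 = 0 := by have : (G 0 2)^2 = 0 := by linarith
                             exact pow_eq_zero_iff (by norm_num) |>.mp this
  have h10 : G 1 0 = 0 := by have : (G 1 0)^2 = 0 := by linarith
                             exact pow_eq_zero_iff (by norm_num) |>.mp this
  have h11 : G 1 1 = 0 := by have : (G 1 1)^2 = 0 := by linarith
                             exact pow_eq_zero_iff (by norm_num) |>.mp this
  have h12 : G 1 2 = 0 := by have : (G 1 2)^2 = 0 := by linarith
                             exact pow_eq_zero_iff (by norm_num) |>.mp this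
  have h20 : G 2 0 = 0 := by have : (G 2 0)^2 = 0 := by linarith
                             exact pow_eq_zero_iff (by norm_num) |>.mp this
  have h21 : G 2 1 = 0 := by have : (G 2 1)^2 = 0 := by linarith
                             exact pow_eq_zero_iff (by norm_num) |>.mp this
  have h22 : G 2 2 = 0 := by have : (G 2 2)^2 = 0 := by linarith
                             exact pow_eq_zero_iff (by norm_num) |>.mp this
  apply hGdet
  by_cases hx : G 0 3 = 0 ∧ G 1 3 = 0
  · apply Matrix.det_eq_zero_of_row_eq_zero 0
    intro j
    fin_cases j
    · exact h00
    · exact h01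
    · exact h02
    · exact hx.1
  · rw [← Matrix.exists_mulVec_eq_zero_iff]
    refine ⟨![G 1 3, -(G 0 3), 0, 0], ?_, ?_⟩
    · intro h
      apply hx
      constructor
      · have := congrFun h 1; simpa using this
      · have := congrFun h 0; simpa using this
    · funext a
      have h30 : G 3 0 = G 0 3 := hsymE 3 0
      have h31 : G 3 1 = G 1 3 := hsymE 3 1
      fin_cases a <;>
        · simp [Matrix.mulVec, dotProduct, Fin.sum_univ_four, h00, h01, h10, h11,
            h20, h21, h30, h31]
          try ring


variable (B : LinearMap.BilinForm ℝ V4)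

def Qmat : Matrix (Fin 4) (Fin 4) ℝ := Matrix.of fun i j => B (bV i) (bV j)

lemma Qmat_symm (hBsymm : ∀ x y, B x y = B y x) : (Qmat B)ᵀ = Qmat B := by
  ext i j
  simp [Qmat, Matrix.transpose_apply, hBsymm (bV j) (bV i)]

lemma B_sum_left (c : Fin 4 → ℝ) (y : V4) :
    B (∑ i, c i • bV i) y = ∑ i, c i * B (bV i) y := by
  simp [map_sum, _root_.map_smul, LinearMap.sum_apply, LinearMap.smul_apply, smul_eq_mul]

lemma B_sum_right (c : Fin 4 → ℝ) (x : V4) :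
    B x (∑ i, c i • bV i) = ∑ i, c i * B x (bV i) := by
  simp [map_sum, _root_.map_smul, smul_eq_mul]

lemma Qmat_det_ne_zero (hBnd : ∀ x, (∀ y, B x y = 0) → x = 0)
    (hBsymm : ∀ x y, B x y = B y x) : (Qmat B).det ≠ 0 := by
  intro hdet
  obtain ⟨v, hv, hmul⟩ := Matrix.exists_mulVec_eq_zero_iff.mpr hdet
  set x := ∑ j, v j • bV j with hx
  have hxz : x = 0 := by
    apply hBnd
    intro y
    have hyrepr : y = ∑ i, bV.repr y i • bV i := (bV.sum_repr y).symm
    rw [hyrepr, B_sum_right]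
    have hbasis : ∀ i : Fin 4, B x (bV i) = 0 := by
      intro i
      rw [hx, B_sum_left]
      have := congrFun hmul i
      simp only [Matrix.mulVec, dotProduct, Qmat, Pi.zero_apply] at this
      rw [← this]
      refine Finset.sum_congr rfl fun j _ => ?_
      rw [hBsymm (bV j) (bV i)]
      simp [Matrix.of_apply]
      ring
    simp [hbasis]
  apply hv
  funext j
  have h2 := congrFun (bV.repr_sum_self v) j
  rw [← hx] at h2
  rw [← h2, hxz]
  simp

lemma Mof_iso (A : V4 ≃ₗ[ℝ] V4) (hA : A ∈ IsometryGrp B) :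
    (Mof A)ᵀ * Qmat B * Mof A = Qmat B := by
  ext a b
  have hAa := A_apply_basis A a
  have hAb := A_apply_basis A b
  have hiso := hA (bV a) (bV b)
  rw [hAa, hAb, B_sum_left] at hiso
  have hexp : ∀ i, B (bV i) (∑ j, Mof A j b • bV j) = ∑ j, Mof A j b * B (bV i) (bV j) :=
    fun i => B_sum_right B _ _
  simp only [hexp] at hiso
  calc ((Mof A)ᵀ * Qmat B * Mof A) a b
      = ∑ j, ∑ i, Mof A i a * B (bV i) (bV j) * Mof A j b := by
        simp [Matrix.mul_apply, Matrix.transpose_apply, Qmat, Finset.sum_mul]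
    _ = ∑ i, Mof A i a * ∑ j, Mof A j b * B (bV i) (bV j) := by
        rw [Finset.sum_comm]
        refine Finset.sum_congr rfl fun i _ => ?_
        rw [Finset.mul_sum]
        exact Finset.sum_congr rfl fun j _ => by ring
    _ = B (bV a) (bV b) := hiso
    _ = (Qmat B) a b := rfl

/-- the continuous invariant -/
def gInv (f : V4 → V4 → V4) : ℝ :=
  (((Qmat B)⁻¹ * km f) * ((Qmat B)⁻¹ * km f)).trace

lemma km_continuous : Continuous km := by
  apply continuous_matrix
  intro a b
  simp only [km, Matrix.of_apply]
  apply continuous_finset_sum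
  intro k _
  apply continuous_finset_sum
  intro j _
  have hN : ∀ a b k : Fin 4, Continuous fun f : V4 → V4 → V4 => Nf f a b k := by
    intro a b k
    have h1 : Continuous fun f : V4 → V4 → V4 => f (bV a) (bV b) :=
      (continuous_apply (bV b)).comp (continuous_apply (bV a))
    have h2 : Continuous (eEquiv : V4 → Fin 4 → ℝ) :=
      eEquiv.toLinearMap.continuous_of_finiteDimensional
    exact (continuous_apply k).comp (h2.comp h1)
  exact (hN a j k).mul (hN b k j)

lemma gInv_continuous : Continuous (gInv B) :=
  Continuous.matrix_trace ((continuous_const.matrix_mul km_continuous).matrix_mul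
    (continuous_const.matrix_mul km_continuous))

lemma km_zero : km (0 : V4 → V4 → V4) = 0 := by
  ext a b
  simp [km, Nf]

lemma gInv_zero : gInv B 0 = 0 := by
  simp [gInv, km_zero]

end
end Su2SumRAux

open Matrix Su2SumRAux in
/-- For every nondegenerate symmetric bilinear form `B` on `ℝ⁴ = ℝ³ × ℝ`, the bracket of
`su(2) ⊕ ℝ` is NOT in the null cone of the `O(B)`-action. -/
theorem su2_sum_R_not_in_null_cone
    (B : LinearMap.BilinForm ℝ ((Fin 3 → ℝ) × ℝ))
    (hBnd : ∀ x, (∀ y, B x y = 0) → x = 0)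
    (hBsymm : ∀ x y, B x y = B y x) :
    ¬ InNullCone B su2SumRBracket := by
  intro h
  classical
  set Q := Qmat B with hQ
  have hQdet : Q.det ≠ 0 := Qmat_det_ne_zero B hBnd hBsymm
  have hQsym : Qᵀ = Q := Qmat_symm B hBsymm
  set J0 : ℝ := ((Q⁻¹ * Kmat) * (Q⁻¹ * Kmat)).trace with hJ0
  have hJ0ne : J0 ≠ 0 := by
    rw [hJ0, show Kmat = Matrix.diagonal ![(-2:ℝ),-2,-2,0] from rfl]
    exact J0_ne_zero Q hQdet hQsym
  set S := {f : V4 → V4 → V4 |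
    ∃ A ∈ IsometryGrp B, f = fun x y => A.symm (su2SumRBracket (A x) (A y))} with hS
  have hconst : ∀ f ∈ S, gInv B f = J0 := by
    rintro f ⟨A, hA, rfl⟩
    rw [gInv, km_orbit_matrix A, ← hQ]
    exact inv_trace_invariant Q hQdet (Mof A) (Mof A.symm) (Mof_mul_symm A)
      (by rw [hQ]; exact Mof_iso B A hA) Kmat
  have hmem : gInv B 0 ∈ closure (gInv B '' S) :=
    image_closure_subset_closure_image (gInv_continuous B) ⟨0, h, rfl⟩
  have himg : gInv B '' S ⊆ {J0} := by
    rintro - ⟨f, hf, rfl⟩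
    exact hconst f hf
  have hfin : gInv B 0 ∈ ({J0} : Set ℝ) := by
    have := closure_mono himg hmem
    rwa [closure_singleton] at this
  rw [gInv_zero] at hfin
  exact hJ0ne (Set.mem_singleton_iff.mp hfin).symm
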